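/- Non-malleability transfers from the BIT function family to arbitrary binary AVCs: if a (k,n)-coding scheme (Enc, Dec) is ε-non-malleable with respect to the family F_BIT = {Keep, Flip, Set0, Set1}ⁿ (i.e., for every f ∈ F_BIT there is a distribution D_f with SD(Tamper_m^f; Copy(D_f, m)) ≤ ε for all m), then for every sequence (W_{s₁},…,W_{sₙ}) of binary channels, letting D_𝐬 = Σ_{f∈F_BIT} (∏_{i∈[n]} Φ_{fᵢ}(W_{sᵢ})) D_f where Φ_{Keep}, Φ_{Flip}, Φ_{Set0}, Φ_{Set1} extract the convex-decomposition coefficients of each W_{sᵢ}, D_𝐬 is a probability distribution independent of m and SD(Tamper_m^{W_𝐬}; Copy(D_𝐬, m)) ≤ ε for all messages m. -/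

import Mathlib

noncomputable def SD {Ω : Type*} [Fintype Ω] (P Q : Ω → ℝ) : ℝ :=
  (1 / 2) * ∑ ω, |P ω - Q ω|

/-- The four bitwise tampering operations Keep, Flip, Set0, Set1. -/
inductive BitOp | keep | flip | set0 | set1
deriving DecidableEq

instance instFintypeBitOp : Fintype BitOp :=
  ⟨{BitOp.keep, BitOp.flip, BitOp.set0, BitOp.set1}, fun x => by cases x <;> simp⟩

def BitOp.apply : BitOp → ZMod 2 → ZMod 2
  | .keep, x => x
  | .flip, x => x + 1
  | .set0, _ => 0
  | .set1, _ => 1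

/-- The elementary (deterministic) channel matrix of a bit operation. -/
def elemChannel (op : BitOp) : Matrix (ZMod 2) (ZMod 2) ℝ :=
  fun x y => if op.apply x = y then 1 else 0

/-- `Copy(D, m)`: `none` encodes `same*`, `some none` encodes `⊥`,
`some (some m')` encodes the message `m'`. -/
noncomputable def copyDist {Msg : Type*} [DecidableEq Msg]
    (D : Option (Option Msg) → ℝ) (m : Msg) : Option Msg → ℝ :=
  fun o => D (some o) + (if o = some m then D none else 0)

/-- Non-malleability transfers from the BIT family to arbitrary binary AVCs:
if `(Enc, Dec)` is `ε`-non-malleable w.r.t. `F_BIT`, then for any sequence of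
binary channels `W_𝐬`, decomposed coordinatewise into the elementary channels
with coefficients `α`, the mixture `D_𝐬 = Σ_f (∏ᵢ α_{i,fᵢ}) D_f` is a
probability distribution (independent of `m`) with
`SD(Tamper_m^{W_𝐬}; Copy(D_𝐬, m)) ≤ ε` for every message `m`. -/
theorem stmt_13 (k n : ℕ) (ε : ℝ)
    (R : Type) [Fintype R] (μ : R → ℝ)
    (hμ : (∀ r, 0 ≤ μ r) ∧ ∑ r, μ r = 1)
    (Enc : (Fin k → ZMod 2) → R → (Fin n → ZMod 2))
    (Dec : (Fin n → ZMod 2) → Option (Fin k → ZMod 2))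
    -- the channel sequence and its convex decomposition into elementary channels
    (W : Fin n → Matrix (ZMod 2) (ZMod 2) ℝ)
    (α : Fin n → BitOp → ℝ)
    (hαnonneg : ∀ i op, 0 ≤ α i op)
    (hαsum : ∀ i, ∑ op, α i op = 1)
    (hdecomp : ∀ i, W i = ∑ op, α i op • elemChannel op)
    -- `ε`-non-malleability w.r.t. the BIT family, with simulators `D_f`
    (Df : (Fin n → BitOp) → Option (Option (Fin k → ZMod 2)) → ℝ)
    (hDf : ∀ f : Fin n → BitOp,
      (∀ s, 0 ≤ Df f s) ∧ (∑ s, Df f s = 1) ∧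
      ∀ m : Fin k → ZMod 2,
        SD (fun o => ∑ r, μ r *
              (if Dec (fun i => (f i).apply (Enc m r i)) = o then 1 else 0))
           (copyDist (Df f) m) ≤ ε) :
    -- conclusion: the mixture simulator works for the AVC tampering experiment
    let Ds : Option (Option (Fin k → ZMod 2)) → ℝ :=
      fun s => ∑ f : Fin n → BitOp, (∏ i, α i (f i)) * Df f s
    let TamperW : (Fin k → ZMod 2) → Option (Fin k → ZMod 2) → ℝ :=
      fun m o => ∑ r, μ r * ∑ y : Fin n → ZMod 2,
        (∏ i, W i (Enc m r i) (y i)) * (if Dec y = o then 1 else 0)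
    (∀ s, 0 ≤ Ds s) ∧ (∑ s, Ds s = 1) ∧
    ∀ m : Fin k → ZMod 2, SD (TamperW m) (copyDist Ds m) ≤ ε := by
  intro Ds TamperW
  set w : (Fin n → BitOp) → ℝ := fun f => ∏ i, α i (f i) with hw
  have hwnn : ∀ f, 0 ≤ w f := fun f => Finset.prod_nonneg (fun i _ => hαnonneg i (f i))
  have hwsum : (∑ f : Fin n → BitOp, w f) = 1 := by
    have := Finset.prod_univ_sum (fun _ : Fin n => (Finset.univ : Finset BitOp))
      (fun i op => α i op)
    rw [Fintype.piFinset_univ] at this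
    simp only [hαsum, Finset.prod_const_one] at this
    exact this.symm
  -- tampering distribution for a fixed f
  set P : (Fin n → BitOp) → (Fin k → ZMod 2) → Option (Fin k → ZMod 2) → ℝ :=
    fun f m o => ∑ r, μ r * (if Dec (fun i => (f i).apply (Enc m r i)) = o then 1 else 0)
    with hP
  -- key pointwise identity
  have hprod : ∀ (x y : Fin n → ZMod 2),
      (∏ i, W i (x i) (y i)) = ∑ f : Fin n → BitOp, w f * ∏ i, elemChannel (f i) (x i) (y i) := by
    intro x y
    have h1 : ∀ i, W i (x i) (y i) = ∑ op, α i op * elemChannel op (x i) (y i) := by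
      intro i
      rw [hdecomp i]
      simp [Matrix.sum_apply]
    calc (∏ i, W i (x i) (y i))
        = ∏ i, ∑ op, α i op * elemChannel op (x i) (y i) := by
          exact Finset.prod_congr rfl (fun i _ => h1 i)
      _ = ∑ f : Fin n → BitOp, ∏ i, α i (f i) * elemChannel (f i) (x i) (y i) := by
          rw [Finset.prod_univ_sum, Fintype.piFinset_univ]
      _ = ∑ f : Fin n → BitOp, w f * ∏ i, elemChannel (f i) (x i) (y i) := by
          exact Finset.sum_congr rfl (fun f _ => by rw [hw, Finset.prod_mul_distrib])
  have helem : ∀ (f : Fin n → BitOp) (x : Fin n → ZMod 2) (o : Option (Fin k → ZMod 2)),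
      (∑ y : Fin n → ZMod 2, (∏ i, elemChannel (f i) (x i) (y i)) *
        (if Dec y = o then (1:ℝ) else 0))
      = (if Dec (fun i => (f i).apply (x i)) = o then 1 else 0) := by
    intro f x o
    have h1 : ∀ y : Fin n → ZMod 2, (∏ i, elemChannel (f i) (x i) (y i))
        = if (fun i => (f i).apply (x i)) = y then (1:ℝ) else 0 := by
      intro y
      simp only [elemChannel]
      rw [Finset.prod_boole]
      congr 1
      simp [funext_iff]
    simp only [h1, ite_mul, one_mul, zero_mul]
    rw [Finset.sum_ite_eq]
    simp
  have key : ∀ m o, TamperW m o = ∑ f : Fin n → BitOp, w f * P f m o := by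
    intro m o
    simp only [TamperW, hP]
    calc (∑ r, μ r * ∑ y : Fin n → ZMod 2,
          (∏ i, W i (Enc m r i) (y i)) * (if Dec y = o then (1:ℝ) else 0))
        = ∑ r, μ r * ∑ f : Fin n → BitOp,
            w f * (if Dec (fun i => (f i).apply (Enc m r i)) = o then (1:ℝ) else 0) := by
          refine Finset.sum_congr rfl (fun r _ => ?_)
          congr 1
          calc (∑ y : Fin n → ZMod 2,
                (∏ i, W i (Enc m r i) (y i)) * (if Dec y = o then (1:ℝ) else 0))
              = ∑ y : Fin n → ZMod 2, ∑ f : Fin n → BitOp,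
                  w f * ((∏ i, elemChannel (f i) (Enc m r i) (y i)) *
                    (if Dec y = o then (1:ℝ) else 0)) := by
                refine Finset.sum_congr rfl (fun y _ => ?_)
                rw [hprod, Finset.sum_mul]
                exact Finset.sum_congr rfl (fun f _ => by ring)
            _ = ∑ f : Fin n → BitOp, w f * ∑ y : Fin n → ZMod 2,
                  (∏ i, elemChannel (f i) (Enc m r i) (y i)) *
                    (if Dec y = o then (1:ℝ) else 0) := by
                rw [Finset.sum_comm]
                exact Finset.sum_congr rfl (fun f _ => by rw [Finset.mul_sum])
            _ = ∑ f : Fin n → BitOp,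
                  w f * (if Dec (fun i => (f i).apply (Enc m r i)) = o then (1:ℝ) else 0) := by
                exact Finset.sum_congr rfl (fun f _ => by rw [helem])
      _ = ∑ f : Fin n → BitOp, w f * ∑ r, μ r *
            (if Dec (fun i => (f i).apply (Enc m r i)) = o then (1:ℝ) else 0) := by
          simp_rw [Finset.mul_sum]
          rw [Finset.sum_comm]
          exact Finset.sum_congr rfl fun f _ => Finset.sum_congr rfl fun r _ => by ring
  have hcopy : ∀ m o, copyDist Ds m o = ∑ f : Fin n → BitOp, w f * copyDist (Df f) m o := by
    intro m o
    simp only [copyDist, Ds]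
    by_cases h : o = some m <;>
      simp [h, Finset.sum_add_distrib, mul_add, hw]
  refine ⟨?_, ?_, ?_⟩
  · intro s
    exact Finset.sum_nonneg fun f _ => mul_nonneg (hwnn f) ((hDf f).1 s)
  · simp only [Ds]
    rw [Finset.sum_comm]
    calc (∑ f : Fin n → BitOp, ∑ s, w f * Df f s)
        = ∑ f : Fin n → BitOp, w f := by
          refine Finset.sum_congr rfl (fun f _ => ?_)
          rw [← Finset.mul_sum, (hDf f).2.1, mul_one]
      _ = 1 := hwsum
  · intro m
    have hSD : ∀ f, SD (P f m) (copyDist (Df f) m) ≤ ε := fun f => (hDf f).2.2 m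
    calc SD (TamperW m) (copyDist Ds m)
        = (1/2) * ∑ o, |∑ f : Fin n → BitOp, w f * (P f m o - copyDist (Df f) m o)| := by
          unfold SD
          congr 1
          refine Finset.sum_congr rfl (fun o _ => ?_)
          rw [key, hcopy, ← Finset.sum_sub_distrib]
          congr 1
          exact Finset.sum_congr rfl (fun f _ => by ring)
      _ ≤ (1/2) * ∑ o, ∑ f : Fin n → BitOp, w f * |P f m o - copyDist (Df f) m o| := by
          gcongr with o _
          calc |∑ f : Fin n → BitOp, w f * (P f m o - copyDist (Df f) m o)|
              ≤ ∑ f : Fin n → BitOp, |w f * (P f m o - copyDist (Df f) m o)| :=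
                Finset.abs_sum_le_sum_abs _ _
            _ = ∑ f : Fin n → BitOp, w f * |P f m o - copyDist (Df f) m o| := by
                refine Finset.sum_congr rfl (fun f _ => ?_)
                rw [abs_mul, abs_of_nonneg (hwnn f)]
      _ = ∑ f : Fin n → BitOp, w f * SD (P f m) (copyDist (Df f) m) := by
          unfold SD
          simp_rw [Finset.mul_sum]
          rw [Finset.sum_comm]
          exact Finset.sum_congr rfl fun f _ => Finset.sum_congr rfl fun o _ => by ring
      _ ≤ ∑ f : Fin n → BitOp, w f * ε :=
          Finset.sum_le_sum fun f _ => mul_le_mul_of_nonneg_left (hSD f) (hwnn f)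
      _ = ε := by rw [← Finset.sum_mul, hwsum, one_mul]
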